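/- In the setting below, let t ∈ [0,T], c_0 ∈ (0,1], and let x, x' ∈ ℝ^{nd} with d(x,x') ≤ 1 satisfy the off-diagonal condition T − t ≤ c_0 d(x,x')^{α}. Let θ_{t,·}(x) and θ_{t,·}(x') be any flows started from x and x' at time t. Then there exists a constant C ≥ 1, depending only on n, d, α, β, the matrix A and the Hölder constant K of F, such that d(θ_{t,T}(x), θ_{t,T}(x')) ≤ C d(x,x'). -/

import Mathlib

open MeasureTheory

/-- The `i`-th d-dimensional block of a point of `ℝ^{nd}`, as a vector of the Euclidean
space `ℝ^d`. -/
noncomputable def blkOf (n d : ℕ) (x : Fin n × Fin d → ℝ) (i : Fin n) :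
    EuclideanSpace ℝ (Fin d) :=
  (EuclideanSpace.equiv (Fin d) ℝ).symm (fun a => x (i, a))

/-- The anisotropic distance `d(x,y) = Σ_j |(x-y)_j|^{1/(1+α(j-1))}` on `ℝ^{nd}`
(`j : Fin n` is 0-indexed, so the exponent reads `1/(1+α j)`). -/
noncomputable def anisoDist (n d : ℕ) (α : ℝ) (x y : Fin n × Fin d → ℝ) : ℝ :=
  ∑ j : Fin n, ‖blkOf n d (x - y) j‖ ^ (1 / (1 + α * (j : ℕ)))

/-- `θ` is a flow started from `x` at time `t`, i.e. a continuous solution on `[t,T]` of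
`θ s = x + ∫_t^s (A θ_v + F(v, θ_v)) dv`. -/
def IsFlow (n d : ℕ) (T : ℝ) (A : Matrix (Fin n × Fin d) (Fin n × Fin d) ℝ)
    (F : ℝ → (Fin n × Fin d → ℝ) → (Fin n × Fin d → ℝ)) (t : ℝ)
    (x : Fin n × Fin d → ℝ) (θ : ℝ → Fin n × Fin d → ℝ) : Prop :=
  ContinuousOn θ (Set.Icc t T) ∧
  ∀ s ∈ Set.Icc t T, θ s = x + ∫ v in t..s, (A.mulVec (θ v) + F v (θ v))

/- ### Auxiliary lemmas -/


lemma rpow_le_one_add (x γ : ℝ) (hx : 0 ≤ x) (h0 : 0 ≤ γ) (h1 : γ ≤ 1) : x ^ γ ≤ 1 + x := by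
  rcases le_total x 1 with h | h
  · calc x ^ γ ≤ 1 := Real.rpow_le_one hx h h0
    _ ≤ 1 + x := by linarith
  · calc x ^ γ ≤ x ^ (1:ℝ) := Real.rpow_le_rpow_of_exponent_le h h1
    _ = x := Real.rpow_one x
    _ ≤ 1 + x := by linarith

/-- Integral form of Grönwall's inequality. -/
lemma gronwall_integral {f : ℝ → ℝ} {t T a b : ℝ} (htT : t ≤ T) (ha : 0 ≤ a) (hb : 0 ≤ b)
    (hf : ContinuousOn f (Set.Icc t T)) (hf0 : ∀ s ∈ Set.Icc t T, 0 ≤ f s)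
    (hineq : ∀ s ∈ Set.Icc t T, f s ≤ b + ∫ v in t..s, a * f v) :
    ∀ s ∈ Set.Icc t T, f s ≤ b * Real.exp (a * (s - t)) := by
  set cl : ℝ → ℝ := fun s => max t (min s T) with hcl
  have hclmem : ∀ s, cl s ∈ Set.Icc t T := fun s =>
    ⟨le_max_left _ _, max_le htT (min_le_right _ _)⟩
  have hcleq : ∀ s ∈ Set.Icc t T, cl s = s := by
    intro s hs
    simp only [hcl]
    rw [min_eq_left hs.2, max_eq_right hs.1]
  have hclcont : Continuous cl := continuous_const.max (continuous_id.min continuous_const)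
  set g : ℝ → ℝ := fun s => a * f (cl s) with hg
  have hgcont : Continuous g := by
    have : ContinuousOn (fun s : ℝ => f (cl s)) Set.univ :=
      hf.comp hclcont.continuousOn (fun s _ => hclmem s)
    exact continuous_const.mul (continuousOn_univ.1 this)
  have hg0 : ∀ s, 0 ≤ g s := fun s => mul_nonneg ha (hf0 _ (hclmem s))
  set R : ℝ → ℝ := fun s => b + ∫ v in t..s, g v with hR
  have hRderiv : ∀ s, HasDerivAt R (g s) s := by
    intro s
    have h1 : IntervalIntegrable g volume t s := hgcont.intervalIntegrable t s
    have h2 := intervalIntegral.integral_hasDerivAt_right h1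
      hgcont.stronglyMeasurable.stronglyMeasurableAtFilter hgcont.continuousAt
    simpa [hR] using h2.const_add b
  have hR0 : ∀ s ∈ Set.Icc t T, 0 ≤ R s := by
    intro s hs
    have : 0 ≤ ∫ v in t..s, g v :=
      intervalIntegral.integral_nonneg hs.1 (fun v _ => hg0 v)
    simp only [hR]; linarith
  have hfR : ∀ s ∈ Set.Icc t T, f s ≤ R s := by
    intro s hs
    refine (hineq s hs).trans ?_
    have : (∫ v in t..s, a * f v) = ∫ v in t..s, g v := by
      apply intervalIntegral.integral_congr
      intro v hv
      have hv' : v ∈ Set.Icc t T := by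
        rcases hv with ⟨h1, h2⟩
        rw [min_eq_left hs.1] at h1
        rw [max_eq_right hs.1] at h2
        exact ⟨h1, h2.trans hs.2⟩
      simp [hg, hcleq v hv']
    simp [hR, this]
  have key := norm_le_gronwallBound_of_norm_deriv_right_le (δ := b) (K := a) (ε := 0)
    (a := t) (b := T) (f := R) (f' := g)
    (fun s hs => (hRderiv s).continuousAt.continuousWithinAt)
    (fun s hs => (hRderiv s).hasDerivWithinAt)
    (by simp [hR, abs_of_nonneg hb])
    ?_
  · intro s hs
    have h1 := key s hs
    rw [gronwallBound_ε0] at h1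
    calc f s ≤ R s := hfR s hs
    _ ≤ |R s| := le_abs_self _
    _ ≤ b * Real.exp (a * (s - t)) := h1
  · intro s hs
    have hs' : s ∈ Set.Icc t T := ⟨hs.1, hs.2.le⟩
    have h1 : g s = a * f s := by simp [hg, hcleq s hs']
    rw [Real.norm_eq_abs, Real.norm_eq_abs, abs_of_nonneg (hg0 s), abs_of_nonneg (hR0 s hs'), h1]
    have := hfR s hs'
    nlinarith [hf0 s hs']

/-- `blkOf` as a continuous linear map. -/
noncomputable def blkL (n d : ℕ) (i : Fin n) :
    (Fin n × Fin d → ℝ) →L[ℝ] EuclideanSpace ℝ (Fin d) :=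
  LinearMap.toContinuousLinearMap
    { toFun := fun y => blkOf n d y i
      map_add' := fun _ _ => rfl
      map_smul' := fun _ _ => rfl }

lemma blkL_apply (n d : ℕ) (i : Fin n) (y : Fin n × Fin d → ℝ) :
    blkL n d i y = blkOf n d y i := rfl

lemma blk_coord (n d : ℕ) (y : Fin n × Fin d → ℝ) (i : Fin n) (a : Fin d) :
    blkOf n d y i a = y (i, a) := rfl

lemma blk_add (n d : ℕ) (p q : Fin n × Fin d → ℝ) (i : Fin n) :
    blkOf n d (p + q) i = blkOf n d p i + blkOf n d q i := rfl

lemma abs_coord_le_norm_blk (n d : ℕ) (y : Fin n × Fin d → ℝ) (i : Fin n) (a : Fin d) :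
    |y (i, a)| ≤ ‖blkOf n d y i‖ := by
  have h := EuclideanSpace.norm_eq (blkOf n d y i)
  have h2 : |y (i, a)| ^ 2 ≤ ∑ b : Fin d, ‖blkOf n d y i b‖ ^ 2 := by
    have := Finset.single_le_sum (f := fun b => ‖blkOf n d y i b‖ ^ 2)
      (fun b _ => sq_nonneg _) (Finset.mem_univ a)
    simpa [blk_coord, Real.norm_eq_abs, sq_abs] using this
  rw [h]
  have := Real.sqrt_le_sqrt h2
  rwa [Real.sqrt_sq_eq_abs, abs_abs] at this

lemma norm_blk_le_sqrt_mul (n d : ℕ) (y : Fin n × Fin d → ℝ) (i : Fin n) (c : ℝ)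
    (hc : 0 ≤ c) (h : ∀ a, |y (i, a)| ≤ c) : ‖blkOf n d y i‖ ≤ Real.sqrt d * c := by
  rw [EuclideanSpace.norm_eq]
  have h2 : ∑ b : Fin d, ‖blkOf n d y i b‖ ^ 2 ≤ (d : ℝ) * c ^ 2 := by
    calc ∑ b : Fin d, ‖blkOf n d y i b‖ ^ 2 ≤ ∑ _b : Fin d, c ^ 2 := by
          apply Finset.sum_le_sum
          intro b _
          have := h b
          rw [Real.norm_eq_abs, blk_coord]
          nlinarith [abs_nonneg (y (i, b))]
      _ = (d : ℝ) * c ^ 2 := by simp [mul_comm]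
  calc Real.sqrt (∑ b : Fin d, ‖blkOf n d y i b‖ ^ 2) ≤ Real.sqrt ((d : ℝ) * c ^ 2) :=
        Real.sqrt_le_sqrt h2
    _ = Real.sqrt d * c := by
        rw [Real.sqrt_mul (Nat.cast_nonneg d), Real.sqrt_sq hc]

lemma blk_mulVec_zero (n d : ℕ) (A : Matrix (Fin n × Fin d) (Fin n × Fin d) ℝ)
    (hA : ∀ (i j : Fin n) (a b : Fin d), (j : ℕ) + 1 ≠ (i : ℕ) → A (i, a) (j, b) = 0)
    (z : Fin n × Fin d → ℝ) (i : Fin n) (h0 : (i : ℕ) = 0) :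
    blkOf n d (A.mulVec z) i = 0 := by
  have hz : ∀ a : Fin d, (A.mulVec z) (i, a) = 0 := by
    intro a
    simp only [Matrix.mulVec, dotProduct]
    apply Finset.sum_eq_zero
    rintro ⟨j, b⟩ -
    rw [hA i j a b (by omega), zero_mul]
  ext a
  simp [blk_coord, hz a]

lemma blk_mulVec_bound (n d : ℕ) (A : Matrix (Fin n × Fin d) (Fin n × Fin d) ℝ)
    (hA : ∀ (i j : Fin n) (a b : Fin d), (j : ℕ) + 1 ≠ (i : ℕ) → A (i, a) (j, b) = 0)
    (z : Fin n × Fin d → ℝ) (i : Fin n) (h1 : 0 < (i : ℕ)) :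
    ‖blkOf n d (A.mulVec z) i‖ ≤
      Real.sqrt d * ((∑ p : Fin n × Fin d, ∑ q : Fin n × Fin d, |A p q|) *
        ‖blkOf n d z ⟨(i : ℕ) - 1, by omega⟩‖) := by
  set i' : Fin n := ⟨(i : ℕ) - 1, by omega⟩ with hi'
  set SA := ∑ p : Fin n × Fin d, ∑ q : Fin n × Fin d, |A p q| with hSA
  have hSA0 : 0 ≤ SA := Finset.sum_nonneg fun p _ => Finset.sum_nonneg fun q _ => abs_nonneg _
  apply norm_blk_le_sqrt_mul
  · exact mul_nonneg hSA0 (norm_nonneg _)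
  intro a
  simp only [Matrix.mulVec, dotProduct]
  calc |∑ q : Fin n × Fin d, A (i, a) q * z q| ≤ ∑ q : Fin n × Fin d, |A (i, a) q * z q| :=
        Finset.abs_sum_le_sum_abs _ _
    _ ≤ ∑ q : Fin n × Fin d, |A (i, a) q| * ‖blkOf n d z i'‖ := by
        apply Finset.sum_le_sum
        rintro ⟨j, b⟩ -
        by_cases hj : (j : ℕ) + 1 = (i : ℕ)
        · have hjj : j = i' := by
            apply Fin.ext
            simp only [hi']
            omega
          rw [abs_mul]
          apply mul_le_mul_of_nonneg_left _ (abs_nonneg _)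
          rw [hjj]
          exact abs_coord_le_norm_blk n d z i' b
        · rw [hA i j a b hj]
          simp [mul_nonneg (abs_nonneg _) (norm_nonneg _)]
    _ = (∑ q : Fin n × Fin d, |A (i, a) q|) * ‖blkOf n d z i'‖ := by
        rw [Finset.sum_mul]
    _ ≤ SA * ‖blkOf n d z i'‖ := by
        apply mul_le_mul_of_nonneg_right _ (norm_nonneg _)
        exact Finset.single_le_sum (f := fun p => ∑ q : Fin n × Fin d, |A p q|)
          (fun p _ => Finset.sum_nonneg fun q _ => abs_nonneg _) (Finset.mem_univ (i, a))

/-- Key elementary bound: `b^(num/ek) ≤ (1 + b/wk) δ^num` where `wk = δ^ek`. -/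
lemma term_bound {δ wk b ek num : ℝ} (hδp : 0 < δ) (hek : 0 < ek) (hwk : wk = δ ^ ek)
    (hb : 0 ≤ b) (hnum0 : 0 ≤ num) (hnum_le : num ≤ ek) :
    b ^ (num / ek) ≤ (1 + b / wk) * δ ^ num := by
  have hwkp : 0 < wk := hwk ▸ Real.rpow_pos_of_pos hδp _
  have hbw : 0 ≤ b / wk := div_nonneg hb hwkp.le
  have hγ0 : 0 ≤ num / ek := div_nonneg hnum0 hek.le
  have hγ1 : num / ek ≤ 1 := (div_le_one hek).2 hnum_le
  have hsplit : b = (b / wk) * wk := (div_mul_cancel₀ b hwkp.ne').symm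
  calc b ^ (num / ek) = ((b / wk) * wk) ^ (num / ek) := by rw [← hsplit]
    _ = (b / wk) ^ (num / ek) * wk ^ (num / ek) := Real.mul_rpow hbw hwkp.le
    _ ≤ (1 + b / wk) * wk ^ (num / ek) := by
        apply mul_le_mul_of_nonneg_right (rpow_le_one_add _ _ hbw hγ0 hγ1)
        exact Real.rpow_nonneg hwkp.le _
    _ = (1 + b / wk) * δ ^ num := by
        rw [hwk, ← Real.rpow_mul hδp.le]
        congr 1
        field_simp

set_option maxHeartbeats 2000000

/-- Off-diagonal sensitivity of the flows: under the off-diagonal condition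
`T - t ≤ c₀ d(x,x')^α` with `c₀ ∈ (0,1]`, one has `d(θ_{t,T}(x), θ_{t,T}(x')) ≤ C d(x,x')`,
with `C` depending only on the data `n, d, α, β, A, K`. -/
theorem flow_offdiagonal_sensitivity (n d : ℕ) (hn : 1 ≤ n) (hd : 1 ≤ d)
    (α β T : ℝ) (hα : α ∈ Set.Ioo (0 : ℝ) 2) (hβ : β ∈ Set.Ioo (0 : ℝ) 1)
    (hαβ : α + β ∈ Set.Ioo (1 : ℝ) 2) (hβα : β < α) (hT0 : 0 < T) (hT1 : T ≤ 1)
    (A : Matrix (Fin n × Fin d) (Fin n × Fin d) ℝ)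
    (hA : ∀ (i j : Fin n) (a b : Fin d), (j : ℕ) + 1 ≠ (i : ℕ) → A (i, a) (j, b) = 0)
    (F : ℝ → (Fin n × Fin d → ℝ) → (Fin n × Fin d → ℝ))
    (hFc : ContinuousOn (fun p : ℝ × (Fin n × Fin d → ℝ) => F p.1 p.2)
      (Set.Icc 0 T ×ˢ Set.univ))
    (hFstruct : ∀ (i : Fin n) (t : ℝ) (x y : Fin n × Fin d → ℝ),
      (∀ k : Fin n, i ≤ k → blkOf n d x k = blkOf n d y k) →
      blkOf n d (F t x) i = blkOf n d (F t y) i)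
    (K : ℝ) (hK : 0 ≤ K)
    (hF1 : ∀ t ∈ Set.Icc (0 : ℝ) T, ∀ x x' : Fin n × Fin d → ℝ,
      ‖blkOf n d (F t x - F t x') ⟨0, hn⟩‖ ≤
        K * ∑ k : Fin n, ‖blkOf n d (x - x') k‖ ^ (β / (1 + α * (k : ℕ))))
    (hFi : ∀ i : Fin n, 1 ≤ (i : ℕ) → ∀ t ∈ Set.Icc (0 : ℝ) T, ∀ x x' : Fin n × Fin d → ℝ,
      ‖blkOf n d (F t x - F t x') i‖ ≤
        K * ∑ k ∈ Finset.univ.filter (fun k : Fin n => i ≤ k),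
          ‖blkOf n d (x - x') k‖ ^ ((1 + α * ((i : ℕ) - 1 : ℝ) + β) / (1 + α * (k : ℕ)))) :
    ∃ C : ℝ, 1 ≤ C ∧
      ∀ t : ℝ, t ∈ Set.Icc 0 T →
      ∀ c₀ : ℝ, 0 < c₀ → c₀ ≤ 1 →
      ∀ x x' : Fin n × Fin d → ℝ, anisoDist n d α x x' ≤ 1 →
        T - t ≤ c₀ * anisoDist n d α x x' ^ α →
      ∀ θ θ' : ℝ → Fin n × Fin d → ℝ,
        IsFlow n d T A F t x θ → IsFlow n d T A F t x' θ' →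
        anisoDist n d α (θ T) (θ' T) ≤ C * anisoDist n d α x x' := by
  set SA := ∑ p : Fin n × Fin d, ∑ q : Fin n × Fin d, |A p q| with hSAdef
  have hSA0 : 0 ≤ SA := Finset.sum_nonneg fun p _ => Finset.sum_nonneg fun q _ => abs_nonneg _
  set CA := Real.sqrt d * SA with hCAdef
  have hCA0 : 0 ≤ CA := mul_nonneg (Real.sqrt_nonneg _) hSA0
  set M := (n : ℝ) * (CA + K) with hMdef
  have hM0 : 0 ≤ M := mul_nonneg (Nat.cast_nonneg n) (by linarith)
  have hn1 : (1 : ℝ) ≤ (n : ℝ) := by exact_mod_cast hn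
  have hexpM : 1 ≤ Real.exp M := Real.one_le_exp hM0
  set cst := 2 * (n : ℝ) * Real.exp M with hcstdef
  have hcst1 : 1 ≤ cst := by nlinarith
  have hcst0 : 0 ≤ cst := by linarith
  refine ⟨(n : ℝ) * cst, by nlinarith, ?_⟩
  intro t ht c₀ hc₀0 hc₀1 x x' hδ1 hoff θ θ' hθ hθ'
  obtain ⟨hθc, hθe⟩ := hθ
  obtain ⟨hθ'c, hθ'e⟩ := hθ'
  have htT : t ≤ T := ht.2
  have ht0 : 0 ≤ t := ht.1
  set δ := anisoDist n d α x x' with hδdef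
  have hα0 : 0 < α := hα.1
  have hβ0 : 0 < β := hβ.1
  have hδ0 : 0 ≤ δ := Finset.sum_nonneg fun j _ => Real.rpow_nonneg (norm_nonneg _) _
  have hepos : ∀ j : Fin n, (0:ℝ) < 1 + α * (j : ℕ) :=
    fun j => by positivity
  rcases eq_or_lt_of_le hδ0 with hδz | hδp
  · -- degenerate case δ = 0
    have hxx : x = x' := by
      have hsum : ∑ j : Fin n, ‖blkOf n d (x - x') j‖ ^ (1 / (1 + α * (j : ℕ))) = 0 := hδz.symm
      have hall := (Finset.sum_eq_zero_iff_of_nonneg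
        (fun j _ => Real.rpow_nonneg (norm_nonneg _) _)).1 hsum
      funext p
      obtain ⟨j, a⟩ := p
      have h1 := hall j (Finset.mem_univ j)
      have h2 : ‖blkOf n d (x - x') j‖ = 0 :=
        (Real.rpow_eq_zero (norm_nonneg _) (ne_of_gt (by positivity))).1 h1
      have h3 : blkOf n d (x - x') j = 0 := norm_eq_zero.1 h2
      have h4 : (x - x') (j, a) = 0 := by
        have := congrArg (fun v => v a) h3
        simpa [blk_coord] using this
      have h5 : x (j, a) - x' (j, a) = 0 := h4
      linarith
    have htT' : t = T := by
      have hz : c₀ * δ ^ α = 0 := by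
        rw [← hδz, Real.zero_rpow (ne_of_gt hα0), mul_zero]
      rw [hz] at hoff
      linarith
    have hθT : θ T = x := by
      have h := hθe t ⟨le_refl t, htT⟩
      rw [intervalIntegral.integral_same] at h
      rw [← htT']
      simpa using h
    have hθ'T : θ' T = x' := by
      have h := hθ'e t ⟨le_refl t, htT⟩
      rw [intervalIntegral.integral_same] at h
      rw [← htT']
      simpa using h
    rw [hθT, hθ'T, ← hxx]
    have hz2 : anisoDist n d α x x = 0 := by
      unfold anisoDist
      apply Finset.sum_eq_zero
      intro j _
      rw [sub_self]
      have h6 : blkOf n d (0 : Fin n × Fin d → ℝ) j = 0 := rfl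
      rw [h6, norm_zero, Real.zero_rpow (ne_of_gt (by positivity))]
    rw [hz2, ← hδz, mul_zero]
  · -- main case: δ > 0
    set e : Fin n → ℝ := fun i => 1 + α * (i : ℕ) with hedef
    have he1 : ∀ i : Fin n, 1 ≤ e i := fun i => by
      have h1 : (0:ℝ) ≤ ((i : ℕ) : ℝ) := Nat.cast_nonneg _
      simp only [hedef]
      nlinarith [hα0.le]
    have hepos' : ∀ i : Fin n, 0 < e i := fun i => lt_of_lt_of_le one_pos (he1 i)
    set w : Fin n → ℝ := fun i => δ ^ e i with hwdef
    have hwpos : ∀ i, 0 < w i := fun i => Real.rpow_pos_of_pos hδp _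
    set u : ℝ → ℝ := fun s => ∑ i : Fin n, ‖blkOf n d (θ s - θ' s) i‖ / w i with hudef
    have hu0 : ∀ s, 0 ≤ u s := fun s =>
      Finset.sum_nonneg fun i _ => div_nonneg (norm_nonneg _) (hwpos i).le
    have hterm_le_u : ∀ (k : Fin n) (s : ℝ), ‖blkOf n d (θ s - θ' s) k‖ / w k ≤ u s := by
      intro k s
      exact Finset.single_le_sum (f := fun i => ‖blkOf n d (θ s - θ' s) i‖ / w i)
        (fun i _ => div_nonneg (norm_nonneg _) (hwpos i).le) (Finset.mem_univ k)
    have hηw : ∀ (k : Fin n) (s : ℝ), ‖blkOf n d (θ s - θ' s) k‖ ≤ u s * w k := fun k s =>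
      (div_le_iff₀ (hwpos k)).1 (hterm_le_u k s)
    have hmono : ∀ {p q : ℝ}, p ≤ q → δ ^ q ≤ δ ^ p :=
      fun h => Real.rpow_le_rpow_of_exponent_ge hδp hδ1 h
    -- continuity facts
    have hmulVc : Continuous (fun y : Fin n × Fin d → ℝ => A.mulVec y) := by
      apply continuous_pi
      intro p
      simp only [Matrix.mulVec, dotProduct]
      exact continuous_finset_sum _ fun q _ => continuous_const.mul (continuous_apply q)
    have hθF : ContinuousOn (fun v => F v (θ v)) (Set.Icc t T) := by
      have hg : ContinuousOn (fun v : ℝ => (v, θ v)) (Set.Icc t T) :=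
        continuousOn_id.prodMk hθc
      have := hFc.comp hg (fun v hv => ⟨⟨ht0.trans hv.1, hv.2⟩, Set.mem_univ _⟩)
      exact this
    have hθ'F : ContinuousOn (fun v => F v (θ' v)) (Set.Icc t T) := by
      have hg : ContinuousOn (fun v : ℝ => (v, θ' v)) (Set.Icc t T) :=
        continuousOn_id.prodMk hθ'c
      have := hFc.comp hg (fun v hv => ⟨⟨ht0.trans hv.1, hv.2⟩, Set.mem_univ _⟩)
      exact this
    set G : ℝ → Fin n × Fin d → ℝ :=
      fun v => A.mulVec (θ v - θ' v) + (F v (θ v) - F v (θ' v)) with hGdef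
    have hGc : ContinuousOn G (Set.Icc t T) :=
      (hmulVc.comp_continuousOn (hθc.sub hθ'c)).add (hθF.sub hθ'F)
    -- the difference of the flows
    have hflow : ∀ s ∈ Set.Icc t T, θ s - θ' s = (x - x') + ∫ v in t..s, G v := by
      intro s hs
      have hsub : Set.uIcc t s ⊆ Set.Icc t T := by
        rw [Set.uIcc_of_le hs.1]
        exact Set.Icc_subset_Icc le_rfl hs.2
      have hint1 : IntervalIntegrable (fun v => A.mulVec (θ v) + F v (θ v)) volume t s :=
        (((hmulVc.comp_continuousOn hθc).add hθF).mono hsub).intervalIntegrable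
      have hint2 : IntervalIntegrable (fun v => A.mulVec (θ' v) + F v (θ' v)) volume t s :=
        (((hmulVc.comp_continuousOn hθ'c).add hθ'F).mono hsub).intervalIntegrable
      have h3 : (∫ v in t..s, (A.mulVec (θ v) + F v (θ v)))
          - (∫ v in t..s, (A.mulVec (θ' v) + F v (θ' v))) = ∫ v in t..s, G v := by
        rw [← intervalIntegral.integral_sub hint1 hint2]
        apply intervalIntegral.integral_congr
        intro v _
        simp only [hGdef, Matrix.mulVec_sub]
        abel
      rw [hθe s hs, hθ'e s hs, ← h3]
      abel
    -- continuity of the block norms of G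
    have gicont : ∀ i : Fin n, ContinuousOn (fun v => ‖blkOf n d (G v) i‖) (Set.Icc t T) := by
      intro i
      have h1 : ContinuousOn (fun v => blkL n d i (G v)) (Set.Icc t T) :=
        (blkL n d i).continuous.comp_continuousOn hGc
      simpa [blkL_apply] using h1.norm
    -- integral inequality for each block
    have hη_ineq : ∀ (i : Fin n), ∀ s ∈ Set.Icc t T,
        ‖blkOf n d (θ s - θ' s) i‖ ≤
          ‖blkOf n d (x - x') i‖ + ∫ v in t..s, ‖blkOf n d (G v) i‖ := by
      intro i s hs
      have hsub : Set.uIcc t s ⊆ Set.Icc t T := by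
        rw [Set.uIcc_of_le hs.1]
        exact Set.Icc_subset_Icc le_rfl hs.2
      have hGint : IntervalIntegrable G volume t s := (hGc.mono hsub).intervalIntegrable
      have hcomm : blkOf n d (∫ v in t..s, G v) i = ∫ v in t..s, blkOf n d (G v) i := by
        have := (blkL n d i).intervalIntegral_comp_comm hGint
        simpa [blkL_apply] using this.symm
      rw [hflow s hs, blk_add, hcomm]
      calc ‖blkOf n d (x - x') i + ∫ v in t..s, blkOf n d (G v) i‖
          ≤ ‖blkOf n d (x - x') i‖ + ‖∫ v in t..s, blkOf n d (G v) i‖ := norm_add_le _ _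
        _ ≤ _ := add_le_add_right
            (intervalIntegral.norm_integral_le_integral_norm hs.1) _
    -- initial bound
    have hinit : ∀ i : Fin n, ‖blkOf n d (x - x') i‖ ≤ w i := by
      intro i
      have hb0 : (0:ℝ) ≤ ‖blkOf n d (x - x') i‖ := norm_nonneg _
      have h1 : ‖blkOf n d (x - x') i‖ ^ (1 / e i) ≤ δ := by
        rw [hδdef]
        unfold anisoDist
        simp only [hedef]
        exact Finset.single_le_sum
          (f := fun j : Fin n => ‖blkOf n d (x - x') j‖ ^ (1 / (1 + α * (j : ℕ))))
          (fun j _ => Real.rpow_nonneg (norm_nonneg _) _) (Finset.mem_univ i)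
      have h2 : (1 / e i) * e i = 1 := by
        exact one_div_mul_cancel (hepos' i).ne'
      calc ‖blkOf n d (x - x') i‖ = ‖blkOf n d (x - x') i‖ ^ ((1 / e i) * e i) := by
            rw [h2, Real.rpow_one]
        _ = (‖blkOf n d (x - x') i‖ ^ (1 / e i)) ^ e i := Real.rpow_mul hb0 _ _
        _ ≤ δ ^ e i := Real.rpow_le_rpow (Real.rpow_nonneg hb0 _) h1 (hepos' i).le
        _ = w i := by rw [hwdef]
    -- pointwise bound on the A part
    have claimA : ∀ (i : Fin n) (v : ℝ), ‖blkOf n d (A.mulVec (θ v - θ' v)) i‖ ≤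
        CA * (((n : ℝ) + u v) * (δ ^ (-α) * w i)) := by
      intro i v
      have hnu0 : 0 ≤ (n : ℝ) + u v := by linarith [hu0 v, hn1]
      by_cases h0 : (i : ℕ) = 0
      · rw [blk_mulVec_zero n d A hA _ i h0, norm_zero]
        have h7 : 0 < δ ^ (-α) * w i := mul_pos (Real.rpow_pos_of_pos hδp _) (hwpos i)
        exact mul_nonneg hCA0 (mul_nonneg hnu0 h7.le)
      · have h1 : 0 < (i : ℕ) := Nat.pos_of_ne_zero h0
        have hb := blk_mulVec_bound n d A hA (θ v - θ' v) i h1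
        set i' : Fin n := ⟨(i : ℕ) - 1, by omega⟩ with hi'def
        have hb' : ‖blkOf n d (A.mulVec (θ v - θ' v)) i‖ ≤
            CA * ‖blkOf n d (θ v - θ' v) i'‖ := by
          rw [hCAdef, mul_assoc]
          exact hb
        have hw' : w i' = δ ^ (-α) * w i := by
          have hcast : ((i' : ℕ) : ℝ) = ((i : ℕ) : ℝ) - 1 := by
            have h2 : (i' : ℕ) = (i : ℕ) - 1 := rfl
            rw [h2, Nat.cast_sub h1]
            simp
          have hee : e i' = -α + e i := by
            simp only [hedef]
            rw [hcast]
            ring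
          simp only [hwdef]
          rw [hee, Real.rpow_add hδp]
        calc ‖blkOf n d (A.mulVec (θ v - θ' v)) i‖
            ≤ CA * ‖blkOf n d (θ v - θ' v) i'‖ := hb'
          _ ≤ CA * (u v * w i') := mul_le_mul_of_nonneg_left (hηw i' v) hCA0
          _ ≤ CA * (((n : ℝ) + u v) * (δ ^ (-α) * w i)) := by
              rw [hw']
              apply mul_le_mul_of_nonneg_left _ hCA0
              apply mul_le_mul_of_nonneg_right _
                (mul_pos (Real.rpow_pos_of_pos hδp _) (hwpos i)).le
              linarith [hn1]
    -- pointwise bound on the F part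
    have claimF : ∀ (i : Fin n), ∀ v ∈ Set.Icc t T,
        ‖blkOf n d (F v (θ v) - F v (θ' v)) i‖ ≤
          K * (((n : ℝ) + u v) * (δ ^ (-α) * w i)) := by
      intro i v hv
      have hv0T : v ∈ Set.Icc (0:ℝ) T := ⟨ht0.trans hv.1, hv.2⟩
      have hnu0 : 0 ≤ (n : ℝ) + u v := by linarith [hu0 v, hn1]
      by_cases h0 : (i : ℕ) = 0
      · have hi0 : i = ⟨0, hn⟩ := Fin.ext h0
        have hb := hF1 v hv0T (θ v) (θ' v)
        have hsum : (∑ k : Fin n, ‖blkOf n d (θ v - θ' v) k‖ ^ (β / (1 + α * (k : ℕ))))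
            ≤ ((n : ℝ) + u v) * δ ^ β := by
          calc (∑ k : Fin n, ‖blkOf n d (θ v - θ' v) k‖ ^ (β / (1 + α * (k : ℕ))))
              ≤ ∑ k : Fin n, (1 + ‖blkOf n d (θ v - θ' v) k‖ / w k) * δ ^ β := by
                apply Finset.sum_le_sum
                intro k _
                refine term_bound hδp (hepos k) (by simp only [hwdef, hedef]) (norm_nonneg _)
                  hβ0.le ?_
                have h8 : (0:ℝ) ≤ ((k : ℕ) : ℝ) := Nat.cast_nonneg _
                nlinarith [hβ.2, hα0.le]
            _ = ((n : ℝ) + u v) * δ ^ β := by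
                rw [← Finset.sum_mul]
                congr 1
                rw [Finset.sum_add_distrib, Finset.sum_const, Finset.card_univ,
                  Fintype.card_fin, hudef]
                simp [nsmul_eq_mul]
        have hwi : δ ^ β ≤ δ ^ (-α) * w i := by
          have hwi0 : w i = δ ^ (1 + α * ((i:ℕ):ℝ)) := by simp only [hwdef, hedef]
          rw [hwi0, h0, ← Real.rpow_add hδp]
          push_cast
          apply hmono
          have := hαβ.1
          linarith
        calc ‖blkOf n d (F v (θ v) - F v (θ' v)) i‖
            = ‖blkOf n d (F v (θ v) - F v (θ' v)) ⟨0, hn⟩‖ := by rw [hi0]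
          _ ≤ K * ∑ k : Fin n, ‖blkOf n d (θ v - θ' v) k‖ ^ (β / (1 + α * (k : ℕ))) := hb
          _ ≤ K * (((n : ℝ) + u v) * δ ^ β) := mul_le_mul_of_nonneg_left hsum hK
          _ ≤ K * (((n : ℝ) + u v) * (δ ^ (-α) * w i)) := by
              apply mul_le_mul_of_nonneg_left _ hK
              exact mul_le_mul_of_nonneg_left hwi hnu0
      · have h1 : 1 ≤ (i : ℕ) := Nat.one_le_iff_ne_zero.2 h0
        have hb := hFi i h1 v hv0T (θ v) (θ' v)
        have hi1 : (1:ℝ) ≤ ((i : ℕ) : ℝ) := by exact_mod_cast h1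
        have hnum0 : (0:ℝ) ≤ 1 + α * (((i : ℕ) : ℝ) - 1) + β := by nlinarith [hα0.le, hβ0.le]
        have hsum : (∑ k ∈ Finset.univ.filter (fun k : Fin n => i ≤ k),
              ‖blkOf n d (θ v - θ' v) k‖ ^
                ((1 + α * (((i : ℕ) : ℝ) - 1) + β) / (1 + α * (k : ℕ))))
            ≤ ((n : ℝ) + u v) * δ ^ (1 + α * (((i : ℕ) : ℝ) - 1) + β) := by
          calc (∑ k ∈ Finset.univ.filter (fun k : Fin n => i ≤ k),
              ‖blkOf n d (θ v - θ' v) k‖ ^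
                ((1 + α * (((i : ℕ) : ℝ) - 1) + β) / (1 + α * (k : ℕ))))
              ≤ ∑ k ∈ Finset.univ.filter (fun k : Fin n => i ≤ k),
                (1 + ‖blkOf n d (θ v - θ' v) k‖ / w k) *
                  δ ^ (1 + α * (((i : ℕ) : ℝ) - 1) + β) := by
                apply Finset.sum_le_sum
                intro k hk
                have hik : (i : ℕ) ≤ (k : ℕ) := (Finset.mem_filter.1 hk).2
                have hik' : ((i : ℕ) : ℝ) ≤ ((k : ℕ) : ℝ) := by exact_mod_cast hik
                refine term_bound hδp (hepos k) (by simp only [hwdef, hedef]) (norm_nonneg _)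
                  hnum0 ?_
                nlinarith [hα0.le, hβα.le]
            _ ≤ ∑ k : Fin n,
                (1 + ‖blkOf n d (θ v - θ' v) k‖ / w k) *
                  δ ^ (1 + α * (((i : ℕ) : ℝ) - 1) + β) := by
                apply Finset.sum_le_sum_of_subset_of_nonneg (Finset.filter_subset _ _)
                intro k _ _
                have h5 : 0 ≤ ‖blkOf n d (θ v - θ' v) k‖ / w k :=
                  div_nonneg (norm_nonneg _) (hwpos k).le
                have h6 : (0:ℝ) ≤ δ ^ (1 + α * (((i : ℕ) : ℝ) - 1) + β) :=
                  (Real.rpow_pos_of_pos hδp _).le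
                nlinarith
            _ = ((n : ℝ) + u v) * δ ^ (1 + α * (((i : ℕ) : ℝ) - 1) + β) := by
                rw [← Finset.sum_mul]
                congr 1
                rw [Finset.sum_add_distrib, Finset.sum_const, Finset.card_univ,
                  Fintype.card_fin, hudef]
                simp [nsmul_eq_mul]
        have hwi : δ ^ (1 + α * (((i : ℕ) : ℝ) - 1) + β) ≤ δ ^ (-α) * w i := by
          have hwi0 : w i = δ ^ (1 + α * ((i:ℕ):ℝ)) := by simp only [hwdef, hedef]
          rw [hwi0, ← Real.rpow_add hδp]
          apply hmono
          nlinarith [hβ0.le]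
        calc ‖blkOf n d (F v (θ v) - F v (θ' v)) i‖
            ≤ K * ∑ k ∈ Finset.univ.filter (fun k : Fin n => i ≤ k),
                ‖blkOf n d (θ v - θ' v) k‖ ^
                  ((1 + α * (((i : ℕ) : ℝ) - 1) + β) / (1 + α * (k : ℕ))) := hb
          _ ≤ K * (((n : ℝ) + u v) * δ ^ (1 + α * (((i : ℕ) : ℝ) - 1) + β)) :=
              mul_le_mul_of_nonneg_left hsum hK
          _ ≤ K * (((n : ℝ) + u v) * (δ ^ (-α) * w i)) := by
              apply mul_le_mul_of_nonneg_left _ hK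
              exact mul_le_mul_of_nonneg_left hwi hnu0
    -- combined pointwise bound
    have hGbound : ∀ (i : Fin n), ∀ v ∈ Set.Icc t T,
        ‖blkOf n d (G v) i‖ / w i ≤ ((CA + K) * δ ^ (-α)) * ((n : ℝ) + u v) := by
      intro i v hv
      rw [div_le_iff₀ (hwpos i)]
      have h1 : ‖blkOf n d (G v) i‖ ≤ ‖blkOf n d (A.mulVec (θ v - θ' v)) i‖ +
          ‖blkOf n d (F v (θ v) - F v (θ' v)) i‖ := by
        simp only [hGdef]
        rw [blk_add]
        exact norm_add_le _ _
      calc ‖blkOf n d (G v) i‖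
          ≤ ‖blkOf n d (A.mulVec (θ v - θ' v)) i‖ +
            ‖blkOf n d (F v (θ v) - F v (θ' v)) i‖ := h1
        _ ≤ CA * (((n : ℝ) + u v) * (δ ^ (-α) * w i)) +
            K * (((n : ℝ) + u v) * (δ ^ (-α) * w i)) :=
            add_le_add (claimA i v) (claimF i v hv)
        _ = ((CA + K) * δ ^ (-α)) * ((n : ℝ) + u v) * w i := by ring
    -- continuity of u
    have hucont : ContinuousOn u (Set.Icc t T) := by
      rw [hudef]
      apply continuousOn_finset_sum
      intro i _
      have h1 : ContinuousOn (fun s => blkL n d i (θ s - θ' s)) (Set.Icc t T) :=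
        (blkL n d i).continuous.comp_continuousOn (hθc.sub hθ'c)
      have h2 : ContinuousOn (fun s => ‖blkOf n d (θ s - θ' s) i‖) (Set.Icc t T) := by
        simpa [blkL_apply] using h1.norm
      exact h2.div_const _
    set aco := (n : ℝ) * ((CA + K) * δ ^ (-α)) with hacodef
    have haco0 : 0 ≤ aco := by
      have h1 : (0:ℝ) < δ ^ (-α) := Real.rpow_pos_of_pos hδp _
      have h2 : (0:ℝ) ≤ CA + K := by linarith
      rw [hacodef]
      exact mul_nonneg (Nat.cast_nonneg n) (mul_nonneg h2 h1.le)
    -- the integral inequality for n + u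
    have hfineq : ∀ s ∈ Set.Icc t T, (n:ℝ) + u s ≤
        2 * (n:ℝ) + ∫ v in t..s, aco * ((n:ℝ) + u v) := by
      intro s hs
      have hsub : Set.uIcc t s ⊆ Set.Icc t T := by
        rw [Set.uIcc_of_le hs.1]
        exact Set.Icc_subset_Icc le_rfl hs.2
      have hint_i : ∀ i : Fin n,
          IntervalIntegrable (fun v => ‖blkOf n d (G v) i‖ / w i) volume t s :=
        fun i => (((gicont i).mono hsub).div_const _).intervalIntegrable
      have hustep : u s ≤ (n:ℝ) + ∫ v in t..s, aco * ((n:ℝ) + u v) := by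
        have hstep1 : u s ≤ ∑ i : Fin n,
            (‖blkOf n d (x - x') i‖ + ∫ v in t..s, ‖blkOf n d (G v) i‖) / w i := by
          rw [hudef]
          apply Finset.sum_le_sum
          intro i _
          exact (div_le_div_iff_of_pos_right (hwpos i)).2 (hη_ineq i s hs)
        have hstep2 : (∑ i : Fin n,
            (‖blkOf n d (x - x') i‖ + ∫ v in t..s, ‖blkOf n d (G v) i‖) / w i)
            = (∑ i : Fin n, ‖blkOf n d (x - x') i‖ / w i)
              + ∑ i : Fin n, (∫ v in t..s, ‖blkOf n d (G v) i‖) / w i := by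
          rw [← Finset.sum_add_distrib]
          apply Finset.sum_congr rfl
          intro i _
          rw [add_div]
        have hstep3 : (∑ i : Fin n, ‖blkOf n d (x - x') i‖ / w i) ≤ (n : ℝ) := by
          calc (∑ i : Fin n, ‖blkOf n d (x - x') i‖ / w i) ≤ ∑ _i : Fin n, (1:ℝ) :=
                Finset.sum_le_sum fun i _ => (div_le_one (hwpos i)).2 (hinit i)
            _ = (n : ℝ) := by simp
        have hstep4 : (∑ i : Fin n, (∫ v in t..s, ‖blkOf n d (G v) i‖) / w i)
            ≤ ∫ v in t..s, aco * ((n:ℝ) + u v) := by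
          have heq1 : ∀ i : Fin n, (∫ v in t..s, ‖blkOf n d (G v) i‖) / w i
              = ∫ v in t..s, ‖blkOf n d (G v) i‖ / w i := by
            intro i
            rw [intervalIntegral.integral_div]
          have heq : (∑ i : Fin n, (∫ v in t..s, ‖blkOf n d (G v) i‖) / w i)
              = ∫ v in t..s, ∑ i : Fin n, ‖blkOf n d (G v) i‖ / w i := by
            rw [Finset.sum_congr rfl (fun i _ => heq1 i),
              ← intervalIntegral.integral_finset_sum (fun i _ => hint_i i)]
          rw [heq]
          have hintL : IntervalIntegrable
              (fun v => ∑ i : Fin n, ‖blkOf n d (G v) i‖ / w i) volume t s := by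
            have hcont : ContinuousOn (fun v => ∑ i : Fin n, ‖blkOf n d (G v) i‖ / w i)
                (Set.Icc t T) :=
              continuousOn_finset_sum _ fun i _ => (gicont i).div_const _
            exact (hcont.mono hsub).intervalIntegrable
          have hintR : IntervalIntegrable (fun v => aco * ((n:ℝ) + u v)) volume t s :=
            (((continuousOn_const.mul
              (continuousOn_const.add hucont)).mono hsub)).intervalIntegrable
          apply intervalIntegral.integral_mono_on hs.1 hintL hintR
          intro v hv
          have hvT : v ∈ Set.Icc t T := ⟨hv.1, hv.2.trans hs.2⟩
          calc (∑ i : Fin n, ‖blkOf n d (G v) i‖ / w i)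
              ≤ ∑ _i : Fin n, ((CA + K) * δ ^ (-α)) * ((n:ℝ) + u v) :=
                Finset.sum_le_sum fun i _ => hGbound i v hvT
            _ = aco * ((n:ℝ) + u v) := by
                rw [Finset.sum_const, Finset.card_univ, Fintype.card_fin, nsmul_eq_mul,
                  hacodef]
                ring
        calc u s ≤ _ := hstep1
          _ = _ := hstep2
          _ ≤ (n:ℝ) + ∫ v in t..s, aco * ((n:ℝ) + u v) := add_le_add hstep3 hstep4
      linarith
    -- Gronwall
    have hfcont : ContinuousOn (fun s => (n:ℝ) + u s) (Set.Icc t T) :=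
      continuousOn_const.add hucont
    have hgr := gronwall_integral (f := fun s => (n:ℝ) + u s) htT haco0
      (by linarith : (0:ℝ) ≤ 2 * (n:ℝ)) hfcont
      (fun s _ => show (0:ℝ) ≤ (n:ℝ) + u s by linarith [hu0 s]) hfineq
    have hfT := hgr T ⟨htT, le_refl T⟩
    have hexp : aco * (T - t) ≤ M := by
      have h2 : T - t ≤ δ ^ α := by
        have h3 : c₀ * δ ^ α ≤ δ ^ α := by
          have := (Real.rpow_pos_of_pos hδp α).le
          nlinarith
        linarith [hoff]
      calc aco * (T - t) ≤ aco * δ ^ α := by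
            apply mul_le_mul_of_nonneg_left h2 haco0
        _ = (n:ℝ) * (CA + K) * (δ ^ (-α) * δ ^ α) := by rw [hacodef]; ring
        _ = M := by
            rw [← Real.rpow_add hδp, neg_add_cancel, Real.rpow_zero, mul_one, hMdef]
    have huT : (n:ℝ) + u T ≤ cst := by
      calc (n:ℝ) + u T ≤ 2 * (n:ℝ) * Real.exp (aco * (T - t)) := hfT
        _ ≤ 2 * (n:ℝ) * Real.exp M := by
            apply mul_le_mul_of_nonneg_left (Real.exp_le_exp.2 hexp) (by linarith)
        _ = cst := by rw [hcstdef]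
    -- final estimate
    have hfinal : ∀ i : Fin n,
        ‖blkOf n d (θ T - θ' T) i‖ ^ (1 / (1 + α * ((i:ℕ):ℝ))) ≤ cst * δ := by
      intro i
      have h1 : ‖blkOf n d (θ T - θ' T) i‖ ≤ cst * w i := by
        calc ‖blkOf n d (θ T - θ' T) i‖ ≤ u T * w i := hηw i T
          _ ≤ cst * w i := by
              apply mul_le_mul_of_nonneg_right _ (hwpos i).le
              linarith [hu0 T]
      have hei : (1:ℝ) / (1 + α * ((i:ℕ):ℝ)) = 1 / e i := by rw [hedef]
      rw [hei]
      have h2 : 0 ≤ 1 / e i := by positivity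
      calc ‖blkOf n d (θ T - θ' T) i‖ ^ (1 / e i) ≤ (cst * w i) ^ (1 / e i) :=
            Real.rpow_le_rpow (norm_nonneg _) h1 h2
        _ = cst ^ (1 / e i) * (w i) ^ (1 / e i) :=
            Real.mul_rpow hcst0 (hwpos i).le
        _ ≤ cst * δ := by
            have hw1 : (w i) ^ (1 / e i) = δ := by
              rw [hwdef]
              rw [← Real.rpow_mul hδp.le]
              have : e i * (1 / e i) = 1 := by exact mul_one_div_cancel (hepos' i).ne'
              rw [this, Real.rpow_one]
            rw [hw1]
            apply mul_le_mul_of_nonneg_right _ hδ0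
            calc cst ^ (1 / e i) ≤ cst ^ (1:ℝ) :=
                  Real.rpow_le_rpow_of_exponent_le hcst1 ((div_le_one (hepos' i)).2 (he1 i))
              _ = cst := Real.rpow_one _
    calc anisoDist n d α (θ T) (θ' T)
        = ∑ i : Fin n, ‖blkOf n d (θ T - θ' T) i‖ ^ (1 / (1 + α * ((i:ℕ):ℝ))) := rfl
      _ ≤ ∑ _i : Fin n, cst * δ := Finset.sum_le_sum fun i _ => hfinal i
      _ = (n:ℝ) * cst * δ := by
          rw [Finset.sum_const, Finset.card_univ, Fintype.card_fin, nsmul_eq_mul]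
          ring
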